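/- Let l be an odd prime, let q ≥ 2 be an integer not divisible by l, and suppose that the multiplicative order e of −q modulo l is odd. Then for every n ≥ 1, the l-adic valuation of ∏_{i=1}^{n} (q^{2i} − 1) equals the l-adic valuation of ∏_{i=1}^{n} (q^{i} − (−1)^{i}). (These products are, up to the power of q, the orders of GL_n(q²) = q^{n(n−1)} ∏_{i=1}^{n}(q^{2i}−1) and of U_n(q) = q^{n(n−1)/2} ∏_{i=1}^{n}(q^i−(−1)^i); hence |GL_n(q²)| and |U_n(q)| have the same l-part.) -/

import Mathlib

/-- Let `l` be an odd prime, `q ≥ 2` an integer not divisible by `l`,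
and suppose the multiplicative order of `-q` modulo `l` is odd.  Then for every `n ≥ 1`,
the `l`-adic valuation of `∏_{i=1}^{n} (q^(2i) - 1)` equals the `l`-adic valuation of
`∏_{i=1}^{n} (q^i - (-1)^i)`.  (These products are, up to the power of `q`, the orders
of `GL_n(q²)` and of `U_n(q)`; hence `|GL_n(q²)|` and `|U_n(q)|` have the same `l`-part.) -/
theorem padicValInt_order_GL_eq_padicValInt_order_U
    (l : ℕ) (hl : l.Prime) (hlodd : Odd l) (q : ℤ) (hq2 : 2 ≤ q) (hq : ¬ (l : ℤ) ∣ q)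
    (he : Odd (orderOf ((-q : ℤ) : ZMod l))) :
    ∀ n : ℕ, 1 ≤ n →
      padicValInt l (∏ i ∈ Finset.Icc 1 n, (q ^ (2 * i) - 1)) =
        padicValInt l (∏ i ∈ Finset.Icc 1 n, (q ^ i - (-1) ^ i)) := by
  haveI : Fact l.Prime := ⟨hl⟩
  intro n hn
  have hqpow : ∀ i : ℕ, 1 ≤ i → 2 ≤ q ^ i := by
    intro i hi
    calc (2 : ℤ) ≤ q := hq2
    _ = q ^ 1 := (pow_one q).symm
    _ ≤ q ^ i := pow_le_pow_right₀ (by linarith) hi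
  -- factor each term
  have hfact : ∀ i : ℕ, q ^ (2 * i) - 1 = (q ^ i - (-1) ^ i) * (q ^ i + (-1) ^ i) := by
    intro i
    have h1 : ((-1 : ℤ)) ^ i * (-1) ^ i = 1 := by
      rw [← pow_add]
      exact Even.neg_one_pow ⟨i, rfl⟩
    rw [two_mul, pow_add]
    linear_combination h1
  have hprod : (∏ i ∈ Finset.Icc 1 n, (q ^ (2 * i) - 1)) =
      (∏ i ∈ Finset.Icc 1 n, (q ^ i - (-1) ^ i)) *
        (∏ i ∈ Finset.Icc 1 n, (q ^ i + (-1) ^ i)) := by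
    rw [← Finset.prod_mul_distrib]
    exact Finset.prod_congr rfl fun i _ => hfact i
  -- nonvanishing of factors
  have hApos : ∀ i ∈ Finset.Icc 1 n, (0 : ℤ) < q ^ i - (-1) ^ i := by
    intro i hi
    have h2 := hqpow i (Finset.mem_Icc.mp hi).1
    rcases Nat.even_or_odd i with he' | ho'
    · rw [Even.neg_one_pow he']; linarith
    · rw [Odd.neg_one_pow ho']; linarith
  have hBpos : ∀ i ∈ Finset.Icc 1 n, (0 : ℤ) < q ^ i + (-1) ^ i := by
    intro i hi
    have h2 := hqpow i (Finset.mem_Icc.mp hi).1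
    rcases Nat.even_or_odd i with he' | ho'
    · rw [Even.neg_one_pow he']; linarith
    · rw [Odd.neg_one_pow ho']; linarith
  have hA : (∏ i ∈ Finset.Icc 1 n, (q ^ i - (-1) ^ i)) ≠ 0 :=
    ne_of_gt (Finset.prod_pos hApos)
  have hB : (∏ i ∈ Finset.Icc 1 n, (q ^ i + (-1) ^ i)) ≠ 0 :=
    ne_of_gt (Finset.prod_pos hBpos)
  -- l does not divide any q^i + (-1)^i
  have hkey : ∀ i : ℕ, 1 ≤ i → ¬ (l : ℤ) ∣ (q ^ i + (-1) ^ i) := by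
    intro i hi hdvd
    have h0 : ((q ^ i + (-1) ^ i : ℤ) : ZMod l) = 0 :=
      (ZMod.intCast_zmod_eq_zero_iff_dvd _ _).2 hdvd
    push_cast at h0
    have hq0 : ((q : ℤ) : ZMod l) ^ i = -(-1) ^ i := eq_neg_of_add_eq_zero_left h0
    have hneg : ((-q : ℤ) : ZMod l) ^ i = -1 := by
      push_cast
      rw [neg_pow, hq0, mul_neg, ← pow_add]
      rw [Even.neg_one_pow ⟨i, rfl⟩]
    have h2i : ((-q : ℤ) : ZMod l) ^ (i * 2) = 1 := by
      rw [pow_mul, hneg]; norm_num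
    have hdvd2 : orderOf ((-q : ℤ) : ZMod l) ∣ i * 2 := orderOf_dvd_of_pow_eq_one h2i
    have hcop : (orderOf ((-q : ℤ) : ZMod l)).Coprime 2 :=
      he.coprime_two_right
    have hdvdi : orderOf ((-q : ℤ) : ZMod l) ∣ i := hcop.dvd_of_dvd_mul_right hdvd2
    have hone : ((-q : ℤ) : ZMod l) ^ i = 1 := orderOf_dvd_iff_pow_eq_one.mp hdvdi
    rw [hone] at hneg
    have h2 : ((2 : ℕ) : ZMod l) = 0 := by push_cast; linear_combination hneg
    have hl2 : l ∣ 2 := (ZMod.natCast_eq_zero_iff _ _).1 h2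
    have := Nat.le_of_dvd (by norm_num) hl2
    obtain ⟨k, hk⟩ := hlodd
    have := hl.two_le
    omega
  have hnd : ¬ (l : ℤ) ∣ (∏ i ∈ Finset.Icc 1 n, (q ^ i + (-1) ^ i)) := by
    intro hdvd
    obtain ⟨i, hi, hdi⟩ := (Nat.prime_iff_prime_int.1 hl).dvd_finset_prod_iff _ |>.mp hdvd
    exact hkey i (Finset.mem_Icc.mp hi).1 hdi
  rw [hprod, padicValInt.mul hA hB, padicValInt.eq_zero_of_not_dvd hnd, add_zero]
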